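/- (Proposition 2.9(ii), first part.) Let 𝕂 be a field, r and s nonzero in 𝕂 with rs⁻¹ not a root of unity, φ a nonzero element of 𝕂, m ≥ 0 an integer, and φ′ = φ(rs⁻¹)^{−m}. Then in the Verma module M(φ, φ′) the subspace N = Span_𝕂{v_j : j ≥ m+1} is a U_{r,s}(sl_2)-submodule, N is isomorphic as a U_{r,s}(sl_2)-module to the Verma module M(φ(rs⁻¹)^{−(m+1)}, φ′(rs⁻¹)^{m+1}), and N is the unique maximal proper submodule of M(φ, φ′). -/

import Mathlib

/-- Generators of `U_{r,s}(sl_2)`: `e`, `f`, `ω`, `ω⁻¹`, `ω′`, `ω′⁻¹`. -/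
inductive UGen : Type
  | e | f | w | winv | w' | w'inv

open FreeAlgebra in
/-- The defining relations of `U_{r,s}(sl_2)`. -/
inductive URel (𝕂 : Type) [Field 𝕂] (r s : 𝕂) :
    FreeAlgebra 𝕂 UGen → FreeAlgebra 𝕂 UGen → Prop
  | winv_right : URel 𝕂 r s (ι 𝕂 .w * ι 𝕂 .winv) 1
  | winv_left : URel 𝕂 r s (ι 𝕂 .winv * ι 𝕂 .w) 1
  | w'inv_right : URel 𝕂 r s (ι 𝕂 .w' * ι 𝕂 .w'inv) 1
  | w'inv_left : URel 𝕂 r s (ι 𝕂 .w'inv * ι 𝕂 .w') 1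
  | ww' : URel 𝕂 r s (ι 𝕂 .w * ι 𝕂 .w') (ι 𝕂 .w' * ι 𝕂 .w)
  | we : URel 𝕂 r s (ι 𝕂 .w * ι 𝕂 .e) ((r * s⁻¹) • (ι 𝕂 .e * ι 𝕂 .w))
  | wf : URel 𝕂 r s (ι 𝕂 .w * ι 𝕂 .f) ((r⁻¹ * s) • (ι 𝕂 .f * ι 𝕂 .w))
  | w'e : URel 𝕂 r s (ι 𝕂 .w' * ι 𝕂 .e) ((r⁻¹ * s) • (ι 𝕂 .e * ι 𝕂 .w'))
  | w'f : URel 𝕂 r s (ι 𝕂 .w' * ι 𝕂 .f) ((r * s⁻¹) • (ι 𝕂 .f * ι 𝕂 .w'))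
  | ef : URel 𝕂 r s (ι 𝕂 .e * ι 𝕂 .f - ι 𝕂 .f * ι 𝕂 .e)
      ((r - s)⁻¹ • (ι 𝕂 .w - ι 𝕂 .w'))

/-- The two-parameter quantum group `U_{r,s}(sl_2)`: the quotient of the free
algebra on the six generators by the defining relations. -/
abbrev Ursl2 (𝕂 : Type) [Field 𝕂] (r s : 𝕂) : Type := RingQuot (URel 𝕂 r s)

/-- The image of a generator in `U_{r,s}(sl_2)`. -/
def UGen.toU {𝕂 : Type} [Field 𝕂] (r s : 𝕂) (x : UGen) : Ursl2 𝕂 r s :=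
  RingQuot.mkAlgHom 𝕂 (URel 𝕂 r s) (FreeAlgebra.ι 𝕂 x)

/-- The quantum integer `[m] = (rᵐ − sᵐ)/(r − s)`. -/
def qInt {𝕂 : Type} [Field 𝕂] (r s : 𝕂) (m : ℕ) : 𝕂 := (r ^ m - s ^ m) / (r - s)

namespace Stmt11Aux

variable {𝕂 : Type} [Field 𝕂] {r s : 𝕂}

theorem Uinduction {motive : Ursl2 𝕂 r s → Prop}
    (alg : ∀ c : 𝕂, motive (algebraMap 𝕂 (Ursl2 𝕂 r s) c))
    (gen : ∀ g : UGen, motive (UGen.toU r s g))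
    (mul : ∀ a b, motive a → motive b → motive (a * b))
    (add : ∀ a b, motive a → motive b → motive (a + b)) (x : Ursl2 𝕂 r s) :
    motive x := by
  obtain ⟨y, rfl⟩ := RingQuot.mkAlgHom_surjective 𝕂 (URel 𝕂 r s) x
  induction y using FreeAlgebra.induction with
  | grade0 c => rw [AlgHom.commutes]; exact alg c
  | grade1 g => exact gen g
  | mul a b ha hb => rw [map_mul]; exact mul _ _ ha hb
  | add a b ha hb => rw [map_add]; exact add _ _ ha hb

theorem winv_w : (UGen.toU r s .winv) * (UGen.toU r s .w) = 1 := by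
  have h := RingQuot.mkAlgHom_rel 𝕂 (URel.winv_left (𝕂 := 𝕂) (r := r) (s := s))
  simpa only [UGen.toU, map_mul, map_one] using h

theorem w'inv_w' : (UGen.toU r s .w'inv) * (UGen.toU r s .w') = 1 := by
  have h := RingQuot.mkAlgHom_rel 𝕂 (URel.w'inv_left (𝕂 := 𝕂) (r := r) (s := s))
  simpa only [UGen.toU, map_mul, map_one] using h

theorem inv_eig {M : Type} [AddCommGroup M] [Module 𝕂 M]
    (ρ : Ursl2 𝕂 r s →ₐ[𝕂] Module.End 𝕂 M) {a b : Ursl2 𝕂 r s} (hab : a * b = 1)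
    {x : M} {lam : 𝕂} (hlam : lam ≠ 0) (hx : ρ b x = lam • x) :
    ρ a x = lam⁻¹ • x := by
  have h1 : (ρ a * ρ b) x = x := by rw [← map_mul, hab, map_one]; rfl
  rw [Module.End.mul_apply, hx, LinearMap.map_smul] at h1
  calc ρ a x = lam⁻¹ • (lam • ρ a x) := by
        rw [smul_smul, inv_mul_cancel₀ hlam, one_smul]
    _ = lam⁻¹ • x := by rw [h1]

def cseq (r s : 𝕂) (m : ℕ) : ℕ → 𝕂
  | 0 => 1
  | j + 1 => cseq r s m j * qInt r s (m + j + 2) / qInt r s (j + 1)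

end Stmt11Aux

set_option maxHeartbeats 2000000 in
open Stmt11Aux in
/-- Proposition 2.9(ii), first part: if `φ′ = φ(rs⁻¹)^{−m}` for some integer `m ≥ 0`,
then in the Verma module `M(φ, φ′)` (realized on a space `M` with basis `(v_j)_{j∈ℕ}`)
the span `N` of `{v_j : j ≥ m+1}` is a `U_{r,s}(sl_2)`-submodule, `N` is isomorphic as
a `U_{r,s}(sl_2)`-module to the Verma module `M(φ(rs⁻¹)^{−(m+1)}, φ′(rs⁻¹)^{m+1})`
(realized on a space `M₂` with basis `(u_j)_{j∈ℕ}`), and `N` is the unique maximal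
proper submodule of `M(φ, φ′)`. -/
theorem stmt11 {𝕂 : Type} [Field 𝕂] (r s : 𝕂) (hr : r ≠ 0) (hs : s ≠ 0)
    (hroot : ∀ k : ℤ, (r * s⁻¹) ^ k = 1 → k = 0)
    (φ φ' : 𝕂) (hφ : φ ≠ 0) (m : ℕ) (hφ' : φ' = φ * (r * s⁻¹) ^ (-(m : ℤ)))
    -- a realization of the Verma module `M(φ, φ′)`
    (M : Type) [AddCommGroup M] [Module 𝕂 M] (v : Module.Basis ℕ 𝕂 M)
    (ρ : Ursl2 𝕂 r s →ₐ[𝕂] Module.End 𝕂 M)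
    (hw : ∀ j : ℕ, ρ (UGen.toU r s .w) (v j) = (φ * (r * s⁻¹) ^ (-(j : ℤ))) • v j)
    (hw' : ∀ j : ℕ, ρ (UGen.toU r s .w') (v j) = (φ' * (r * s⁻¹) ^ (j : ℤ)) • v j)
    (hf : ∀ j : ℕ, ρ (UGen.toU r s .f) (v j) = qInt r s (j + 1) • v (j + 1))
    (he0 : ρ (UGen.toU r s .e) (v 0) = 0)
    (he : ∀ j : ℕ, ρ (UGen.toU r s .e) (v (j + 1)) =
      ((r ^ (-(j : ℤ)) * φ - s ^ (-(j : ℤ)) * φ') / (r - s)) • v j)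
    -- a realization of the Verma module `M(φ(rs⁻¹)^{−(m+1)}, φ′(rs⁻¹)^{m+1})`
    (M₂ : Type) [AddCommGroup M₂] [Module 𝕂 M₂] (u : Module.Basis ℕ 𝕂 M₂)
    (ρ₂ : Ursl2 𝕂 r s →ₐ[𝕂] Module.End 𝕂 M₂)
    (hw₂ : ∀ j : ℕ, ρ₂ (UGen.toU r s .w) (u j) =
      (φ * (r * s⁻¹) ^ (-((m : ℤ) + 1)) * (r * s⁻¹) ^ (-(j : ℤ))) • u j)
    (hw'₂ : ∀ j : ℕ, ρ₂ (UGen.toU r s .w') (u j) =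
      (φ' * (r * s⁻¹) ^ ((m : ℤ) + 1) * (r * s⁻¹) ^ (j : ℤ)) • u j)
    (hf₂ : ∀ j : ℕ, ρ₂ (UGen.toU r s .f) (u j) = qInt r s (j + 1) • u (j + 1))
    (he0₂ : ρ₂ (UGen.toU r s .e) (u 0) = 0)
    (he₂ : ∀ j : ℕ, ρ₂ (UGen.toU r s .e) (u (j + 1)) =
      ((r ^ (-(j : ℤ)) * (φ * (r * s⁻¹) ^ (-((m : ℤ) + 1))) -
        s ^ (-(j : ℤ)) * (φ' * (r * s⁻¹) ^ ((m : ℤ) + 1))) / (r - s)) • u j) :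
    letI : Module (Ursl2 𝕂 r s) M := Module.compHom M ρ.toRingHom
    letI : Module (Ursl2 𝕂 r s) M₂ := Module.compHom M₂ ρ₂.toRingHom
    ∃ N : Submodule (Ursl2 𝕂 r s) M,
      (N : Set M) = ↑(Submodule.span 𝕂 (Set.range fun j : ℕ => v (m + 1 + j))) ∧
      Nonempty (N ≃ₗ[Ursl2 𝕂 r s] M₂) ∧
      N ≠ ⊤ ∧ ∀ P : Submodule (Ursl2 𝕂 r s) M, P ≠ ⊤ → P ≤ N := by
  subst hφ'
  letI : Module (Ursl2 𝕂 r s) M := Module.compHom M ρ.toRingHom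
  letI : Module (Ursl2 𝕂 r s) M₂ := Module.compHom M₂ ρ₂.toRingHom
  -- basic nonvanishing facts
  have ht0 : r * s⁻¹ ≠ 0 := mul_ne_zero hr (inv_ne_zero hs)
  have hrsne : r ≠ s := by
    intro h
    have := hroot 1 (by rw [zpow_one, h, mul_inv_cancel₀ hs])
    norm_num at this
  have hrs : r - s ≠ 0 := sub_ne_zero_of_ne hrsne
  have hpow : ∀ n : ℕ, n ≠ 0 → r ^ n ≠ s ^ n := by
    intro n hn h
    apply hn
    have h2 : (r * s⁻¹) ^ (n : ℤ) = 1 := by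
      rw [zpow_natCast, mul_pow, h, inv_pow, mul_inv_cancel₀ (pow_ne_zero _ hs)]
    exact_mod_cast hroot n h2
  have hq : ∀ n : ℕ, n ≠ 0 → qInt r s n ≠ 0 := fun n hn =>
    div_ne_zero (sub_ne_zero_of_ne (hpow n hn)) hrs
  have hc : ∀ j : ℕ, cseq r s m j ≠ 0 := by
    intro j
    induction j with
    | zero => exact one_ne_zero
    | succ j ih =>
      exact div_ne_zero (mul_ne_zero ih (hq _ (by omega))) (hq _ (by omega))
  have hφ'ne : φ * (r * s⁻¹) ^ (-(m : ℤ)) ≠ 0 := mul_ne_zero hφ (zpow_ne_zero _ ht0)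
  -- eigenvalue facts for the inverse generators
  have hwinv : ∀ j : ℕ, ρ (UGen.toU r s .winv) (v j) =
      (φ * (r * s⁻¹) ^ (-(j : ℤ)))⁻¹ • v j := fun j =>
    inv_eig ρ winv_w (mul_ne_zero hφ (zpow_ne_zero _ ht0)) (hw j)
  have hw'inv : ∀ j : ℕ, ρ (UGen.toU r s .w'inv) (v j) =
      ((φ * (r * s⁻¹) ^ (-(m : ℤ))) * (r * s⁻¹) ^ (j : ℤ))⁻¹ • v j := fun j =>
    inv_eig ρ w'inv_w' (mul_ne_zero hφ'ne (zpow_ne_zero _ ht0)) (hw' j)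
  have hwinv₂ : ∀ j : ℕ, ρ₂ (UGen.toU r s .winv) (u j) =
      (φ * (r * s⁻¹) ^ (-((m : ℤ) + 1)) * (r * s⁻¹) ^ (-(j : ℤ)))⁻¹ • u j := fun j =>
    inv_eig ρ₂ winv_w (mul_ne_zero (mul_ne_zero hφ (zpow_ne_zero _ ht0)) (zpow_ne_zero _ ht0)) (hw₂ j)
  have hw'inv₂ : ∀ j : ℕ, ρ₂ (UGen.toU r s .w'inv) (u j) =
      ((φ * (r * s⁻¹) ^ (-(m : ℤ))) * (r * s⁻¹) ^ ((m : ℤ) + 1) * (r * s⁻¹) ^ (j : ℤ))⁻¹ • u j := fun j =>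
    inv_eig ρ₂ w'inv_w' (mul_ne_zero (mul_ne_zero hφ'ne (zpow_ne_zero _ ht0)) (zpow_ne_zero _ ht0)) (hw'₂ j)
  -- the span
  set N𝕂 : Submodule 𝕂 M :=
    Submodule.span 𝕂 (Set.range fun j : ℕ => v (m + 1 + j)) with hN𝕂
  have hmem : ∀ j : ℕ, v (m + 1 + j) ∈ N𝕂 := fun j => Submodule.subset_span ⟨j, rfl⟩
  -- the top vanishing coefficient for e
  have hetop : ρ (UGen.toU r s .e) (v (m + 1)) = 0 := by
    have h := he m
    rw [h]
    have hz : r ^ (-(m : ℤ)) * φ - s ^ (-(m : ℤ)) * (φ * (r * s⁻¹) ^ (-(m : ℤ))) = 0 := by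
      rw [mul_zpow, inv_zpow]
      field_simp
      ring
    rw [hz, zero_div, zero_smul]
  -- stability of the span under the generators
  have hgen : ∀ (g : UGen) (j : ℕ), ρ (UGen.toU r s g) (v (m + 1 + j)) ∈ N𝕂 := by
    intro g j
    cases g with
    | e =>
      cases j with
      | zero => rw [show m + 1 + 0 = m + 1 from rfl, hetop]; exact N𝕂.zero_mem
      | succ k =>
        rw [show m + 1 + (k + 1) = (m + 1 + k) + 1 by omega, he (m + 1 + k)]
        exact N𝕂.smul_mem _ (hmem k)
    | f =>
      rw [hf (m + 1 + j), show m + 1 + j + 1 = m + 1 + (j + 1) by omega]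
      exact N𝕂.smul_mem _ (hmem (j + 1))
    | w => rw [hw]; exact N𝕂.smul_mem _ (hmem j)
    | winv => rw [hwinv]; exact N𝕂.smul_mem _ (hmem j)
    | w' => rw [hw']; exact N𝕂.smul_mem _ (hmem j)
    | w'inv => rw [hw'inv]; exact N𝕂.smul_mem _ (hmem j)
  have hstab : ∀ x : Ursl2 𝕂 r s, ∀ n ∈ N𝕂, ρ x n ∈ N𝕂 := by
    intro x
    induction x using Uinduction with
    | alg c =>
      intro n hn
      rw [AlgHom.commutes, Module.algebraMap_end_apply]
      exact N𝕂.smul_mem c hn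
    | gen g =>
      intro n hn
      have hle : N𝕂 ≤ N𝕂.comap (ρ (UGen.toU r s g)) := by
        rw [hN𝕂]
        refine Submodule.span_le.2 ?_
        rintro _ ⟨j, rfl⟩
        exact hgen g j
      exact hle hn
    | mul a b ha hb =>
      intro n hn
      rw [map_mul, Module.End.mul_apply]
      exact ha _ (hb _ hn)
    | add a b ha hb =>
      intro n hn
      rw [map_add, LinearMap.add_apply]
      exact N𝕂.add_mem (ha _ hn) (hb _ hn)
  -- the Ursl2-submodule
  refine ⟨{ carrier := N𝕂
            add_mem' := fun ha hb => N𝕂.add_mem ha hb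
            zero_mem' := N𝕂.zero_mem
            smul_mem' := fun x n hn => hstab x n hn }, rfl, ?_, ?_, ?_⟩
  · -- the isomorphism
    have li : LinearIndependent 𝕂 (fun j : ℕ => v (m + 1 + j)) :=
      v.linearIndependent.comp (fun j => m + 1 + j) (fun a b h => by
        simp only [add_right_inj] at h; exact h)
    let b : Module.Basis ℕ 𝕂 N𝕂 := Module.Basis.span li
    let b2 : Module.Basis ℕ 𝕂 N𝕂 := b.unitsSMul (fun j => Units.mk0 (cseq r s m j) (hc j))
    let E : M₂ ≃ₗ[𝕂] N𝕂 := u.equiv b2 (Equiv.refl ℕ)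
    have hE : ∀ j : ℕ, ((E (u j) : N𝕂) : M) = cseq r s m j • v (m + 1 + j) := by
      intro j
      show ((u.equiv b2 (Equiv.refl ℕ)) (u j) : M) = _
      rw [Module.Basis.equiv_apply]
      show ((b.unitsSMul (fun j => Units.mk0 (cseq r s m j) (hc j)) j : N𝕂) : M) = _
      rw [Module.Basis.unitsSMul_apply]
      rw [show ((Units.mk0 (cseq r s m j) (hc j)) • b j : N𝕂) = cseq r s m j • b j from rfl]
      rw [Submodule.coe_smul]
      congr 1
      exact congrArg Subtype.val (Module.Basis.span_apply li j)
    have hequiv : ∀ (x : Ursl2 𝕂 r s) (y : M₂),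
        ((E (ρ₂ x y) : N𝕂) : M) = ρ x ((E y : N𝕂) : M) := by
      intro x
      induction x using Uinduction with
      | alg c =>
        intro y
        rw [AlgHom.commutes, AlgHom.commutes, Module.algebraMap_end_apply,
          Module.algebraMap_end_apply, map_smul, Submodule.coe_smul]
      | mul a b ha hb =>
        intro y
        rw [map_mul, map_mul, Module.End.mul_apply, Module.End.mul_apply, ha, hb]
      | add a b ha hb =>
        intro y
        rw [map_add, map_add, LinearMap.add_apply, LinearMap.add_apply, ← ha, ← hb,
          ← Submodule.coe_add, ← map_add]
      | gen g =>
        intro y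
        refine LinearMap.congr_fun
          (f := N𝕂.subtype ∘ₗ E.toLinearMap ∘ₗ (ρ₂ (UGen.toU r s g)))
          (g := (ρ (UGen.toU r s g)) ∘ₗ N𝕂.subtype ∘ₗ E.toLinearMap) (u.ext fun j => ?_) y
        simp only [LinearMap.comp_apply, Submodule.subtype_apply, LinearEquiv.coe_coe]
        cases g with
        | w =>
          rw [hw₂ j, map_smul, Submodule.coe_smul, hE j, LinearMap.map_smul,
            hw (m + 1 + j)]
          simp only [smul_smul]
          congr 1
          rw [show (-((m + 1 + j : ℕ) : ℤ)) = (-((m : ℤ) + 1)) + (-(j : ℤ)) by push_cast; ring,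
            zpow_add₀ ht0]
          ring
        | winv =>
          rw [hwinv₂ j, map_smul, Submodule.coe_smul, hE j, LinearMap.map_smul,
            hwinv (m + 1 + j)]
          simp only [smul_smul]
          congr 1
          rw [show (-((m + 1 + j : ℕ) : ℤ)) = (-((m : ℤ) + 1)) + (-(j : ℤ)) by push_cast; ring,
            zpow_add₀ ht0, mul_inv, mul_inv, mul_inv]
          ring
        | w' =>
          rw [hw'₂ j, map_smul, Submodule.coe_smul, hE j, LinearMap.map_smul,
            hw' (m + 1 + j)]
          simp only [smul_smul]
          congr 1
          have hzp : (r * s⁻¹) ^ ((m : ℤ) + 1) * (r * s⁻¹) ^ (j : ℤ)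
              = (r * s⁻¹) ^ (((m + 1 + j : ℕ)) : ℤ) := by
            rw [← zpow_add₀ ht0]; congr 1 <;> omega
          rw [← hzp]
          ring
        | w'inv =>
          rw [hw'inv₂ j, map_smul, Submodule.coe_smul, hE j, LinearMap.map_smul,
            hw'inv (m + 1 + j)]
          simp only [smul_smul]
          congr 1
          have hzp : (r * s⁻¹) ^ ((m : ℤ) + 1) * (r * s⁻¹) ^ (j : ℤ)
              = (r * s⁻¹) ^ (((m + 1 + j : ℕ)) : ℤ) := by
            rw [← zpow_add₀ ht0]; congr 1 <;> omega
          rw [← hzp]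
          ring
        | f =>
          rw [hf₂ j, map_smul, Submodule.coe_smul, hE (j + 1), hE j, LinearMap.map_smul,
            hf (m + 1 + j), show m + 1 + (j + 1) = m + 1 + j + 1 by omega]
          simp only [smul_smul]
          congr 1
          rw [show cseq r s m (j + 1)
              = cseq r s m j * qInt r s (m + j + 2) / qInt r s (j + 1) from rfl,
            show m + 1 + j + 1 = m + j + 2 by omega]
          field_simp [hq (j + 1) (by omega)]
        | e =>
          cases j with
          | zero =>
            rw [he0₂, map_zero, hE 0, LinearMap.map_smul,
              show m + 1 + 0 = m + 1 from rfl, hetop, smul_zero]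
            simp
          | succ k =>
            rw [he₂ k, map_smul, Submodule.coe_smul, hE k, hE (k + 1), LinearMap.map_smul,
              show m + 1 + (k + 1) = m + 1 + k + 1 by omega, he (m + 1 + k)]
            simp only [smul_smul]
            congr 1
            have hcs : qInt r s (k + 1) * cseq r s m (k + 1)
                = cseq r s m k * qInt r s (m + k + 2) := by
              rw [show cseq r s m (k + 1)
                  = cseq r s m k * qInt r s (m + k + 2) / qInt r s (k + 1) from rfl]
              field_simp [hq (k + 1) (by omega)]
            have h1 : ((m : ℤ) + 1) = ((m + 1 : ℕ) : ℤ) := by push_cast; ring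
            apply mul_left_cancel₀ (hq (k + 1) (by omega))
            rw [show qInt r s (k + 1) * (cseq r s m (k + 1) *
                ((r ^ (-((m + 1 + k : ℕ) : ℤ)) * φ
                  - s ^ (-((m + 1 + k : ℕ) : ℤ)) * (φ * (r * s⁻¹) ^ (-(m : ℤ)))) / (r - s)))
              = qInt r s (k + 1) * cseq r s m (k + 1) *
                ((r ^ (-((m + 1 + k : ℕ) : ℤ)) * φ
                  - s ^ (-((m + 1 + k : ℕ) : ℤ)) * (φ * (r * s⁻¹) ^ (-(m : ℤ)))) / (r - s))
              from by ring, hcs]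
            rw [h1]
            simp only [qInt, zpow_neg, zpow_natCast, mul_zpow, inv_zpow, inv_inv, mul_pow, inv_pow]
            field_simp
            ring
    refine ⟨{ toFun := fun n => E.symm ⟨n.1, n.2⟩
              map_add' := ?_
              map_smul' := ?_
              invFun := fun y => ⟨(E y : N𝕂).1, (E y : N𝕂).2⟩
              left_inv := ?_
              right_inv := ?_ }⟩
    · intro a b
      rw [← map_add]
      exact congrArg E.symm (Subtype.ext rfl)
    · intro x n
      apply E.injective
      rw [LinearEquiv.apply_symm_apply]
      refine Subtype.ext ?_
      calc ((x • n : _)).1 = ρ x n.1 := rfl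
        _ = ρ x ((E (E.symm ⟨n.1, n.2⟩) : N𝕂) : M) := by
            rw [LinearEquiv.apply_symm_apply]
        _ = ((E (ρ₂ x (E.symm ⟨n.1, n.2⟩)) : N𝕂) : M) := (hequiv x _).symm
        _ = _ := rfl
    · intro n
      exact Subtype.ext (congrArg Subtype.val (E.apply_symm_apply ⟨n.1, n.2⟩))
    · intro y
      exact E.symm_apply_apply y
  · -- N is proper
    intro htop
    have h0 : ∀ x ∈ N𝕂, v.repr x 0 = 0 := by
      intro x hx
      refine Submodule.span_induction ?_ ?_ ?_ ?_ hx
      · rintro _ ⟨j, rfl⟩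
        rw [v.repr_self]
        simp [Finsupp.single_apply]
      · simp
      · intro a b _ _ ha hb
        rw [map_add, Finsupp.add_apply, ha, hb, add_zero]
      · intro c a _ ha
        rw [map_smul, Finsupp.smul_apply, ha, smul_zero]
    have hv0 : v 0 ∈ N𝕂 := Submodule.eq_top_iff'.1 htop (v 0)
    have := h0 (v 0) hv0
    rw [v.repr_self] at this
    simp at this
  · -- uniqueness of the maximal proper submodule
    intro P hP
    have hPsmul : ∀ (c : 𝕂) (x : M), x ∈ P → c • x ∈ P := by
      intro c x hx
      have h := P.smul_mem (algebraMap 𝕂 (Ursl2 𝕂 r s) c) hx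
      rwa [show (algebraMap 𝕂 (Ursl2 𝕂 r s) c) • x = c • x from by
        show ρ (algebraMap 𝕂 (Ursl2 𝕂 r s) c) x = c • x
        rw [AlgHom.commutes, Module.algebraMap_end_apply]] at h
    have hPop : ∀ (a : Ursl2 𝕂 r s) (x : M), x ∈ P → ρ a x ∈ P :=
      fun a x hx => P.smul_mem a hx
    set lam : ℕ → 𝕂 := fun j => φ * (r * s⁻¹) ^ (-(j : ℤ)) with hlamdef
    have hlaminj : Function.Injective lam := by
      intro a b hab
      have h2 : (r * s⁻¹) ^ (-(a : ℤ)) = (r * s⁻¹) ^ (-(b : ℤ)) :=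
        mul_left_cancel₀ hφ hab
      have h3 : (r * s⁻¹) ^ ((a : ℤ)) = (r * s⁻¹) ^ ((b : ℤ)) := by
        rwa [zpow_neg, zpow_neg, inv_inj] at h2
      have h4 : ((a : ℤ)) - b = 0 := hroot _
        (by rw [zpow_sub₀ ht0, h3, div_self (zpow_ne_zero _ ht0)])
      omega
    set Aop : ℕ → Module.End 𝕂 M :=
      fun k => ρ (UGen.toU r s .w) - lam k • (1 : Module.End 𝕂 M) with hAop
    have hco : ∀ a b : ℕ, Commute (Aop a) (Aop b) := by
      intro a b
      have C1 : Commute (ρ (UGen.toU r s .w)) (Aop b) :=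
        (Commute.refl _).sub_right ((Commute.one_right _).smul_right (lam b))
      have C2 : Commute (lam a • (1 : Module.End 𝕂 M)) (Aop b) :=
        (((Commute.one_left _).smul_left (lam a)).sub_right
          (((Commute.refl (1 : Module.End 𝕂 M)).smul_left (lam a)).smul_right (lam b)))
      exact C1.sub_left C2
    set AK : Finset ℕ → Module.End 𝕂 M :=
      fun K => K.noncommProd Aop (fun a _ b _ _ => hco a b) with hAK
    have hAK_empty : AK ∅ = 1 := Finset.noncommProd_empty _ _
    have hAK_insert : ∀ (a : ℕ) (K : Finset ℕ), a ∉ K →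
        AK (insert a K) = Aop a * AK K := fun a K ha =>
      Finset.noncommProd_insert_of_notMem _ _ _ _ ha
    have hAmem : ∀ (K : Finset ℕ) (x : M), x ∈ P → AK K x ∈ P := by
      intro K
      induction K using Finset.induction_on with
      | empty => intro x hx; rw [hAK_empty]; exact hx
      | @insert a K hnm ih =>
        intro x hx
        rw [hAK_insert a K hnm, Module.End.mul_apply, hAop, LinearMap.sub_apply,
          LinearMap.smul_apply, Module.End.one_apply]
        exact sub_mem (hPop _ _ (ih x hx)) (hPsmul _ _ (ih x hx))
    have hAeig : ∀ (K : Finset ℕ) (j : ℕ),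
        AK K (v j) = (∏ k ∈ K, (lam j - lam k)) • v j := by
      intro K
      induction K using Finset.induction_on with
      | empty => intro j; rw [hAK_empty]; simp
      | @insert a K hnm ih =>
        intro j
        rw [hAK_insert a K hnm, Finset.prod_insert hnm, Module.End.mul_apply, ih j,
          LinearMap.map_smul, hAop, LinearMap.sub_apply, LinearMap.smul_apply,
          Module.End.one_apply, hw j]
        simp only [show φ * (r * s⁻¹) ^ (-(j : ℤ)) = lam j from rfl]
        rw [smul_sub, smul_smul, smul_smul, ← sub_smul]
        congr 1
        ring
    have hxrepr : ∀ x : M, x = ∑ i ∈ (v.repr x).support, v.repr x i • v i := by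
      intro x
      conv_lhs => rw [← v.linearCombination_repr x, Finsupp.linearCombination_apply,
        Finsupp.sum]
    have hsep : ∀ x ∈ P, ∀ j : ℕ, v.repr x j ≠ 0 → v j ∈ P := by
      intro x hx j hj
      set K := (v.repr x).support.erase j with hK
      have hAx : AK K x
          = ∑ i ∈ (v.repr x).support,
              (v.repr x i * ∏ k ∈ K, (lam i - lam k)) • v i := by
        conv_lhs => rw [hxrepr x]
        rw [map_sum]
        refine Finset.sum_congr rfl fun i _ => ?_
        rw [LinearMap.map_smul, hAeig K i, smul_smul]
      have hAx2 : AK K x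
          = (v.repr x j * ∏ k ∈ K, (lam j - lam k)) • v j := by
        rw [hAx]
        refine Finset.sum_eq_single j ?_ ?_
        · intro i hi hij
          rw [Finset.prod_eq_zero (Finset.mem_erase.2 ⟨hij, hi⟩) (sub_self (lam i)),
            mul_zero, zero_smul]
        · intro hjn
          exact absurd (Finsupp.mem_support_iff.2 hj) hjn
      have hcne : v.repr x j * ∏ k ∈ K, (lam j - lam k) ≠ 0 :=
        mul_ne_zero hj (Finset.prod_ne_zero_iff.2 fun k hk =>
          sub_ne_zero_of_ne fun hh => (Finset.mem_erase.1 hk).1 (hlaminj hh).symm)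
      have hvj : v j = (v.repr x j * ∏ k ∈ K, (lam j - lam k))⁻¹ • (AK K x) := by
        rw [hAx2, smul_smul, inv_mul_cancel₀ hcne, one_smul]
      rw [hvj]
      exact hPsmul _ _ (hAmem K x hx)
    have hdown : ∀ j : ℕ, j ≤ m → v j ∈ P → v 0 ∈ P := by
      intro j
      induction j with
      | zero => exact fun _ h => h
      | succ k ih =>
        intro hk h
        have hg : (r ^ (-(k : ℤ)) * φ - s ^ (-(k : ℤ)) * (φ * (r * s⁻¹) ^ (-(m : ℤ)))) /
            (r - s) ≠ 0 := by
          refine div_ne_zero ?_ hrs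
          intro hzz
          have h1 : r ^ m * s ^ k = s ^ m * r ^ k := by
            have h := sub_eq_zero.1 hzz
            have h' : φ * ((r : 𝕂) ^ (-(k : ℤ)))
                = φ * (s ^ (-(k : ℤ)) * (r * s⁻¹) ^ (-(m : ℤ))) := by linear_combination h
            have h'' := mul_left_cancel₀ hφ h'
            simp only [zpow_neg, zpow_natCast, mul_zpow, inv_zpow, inv_inv, mul_pow, inv_pow] at h''
            field_simp at h''
            linear_combination h''
          have h2 : (r * s⁻¹) ^ ((m : ℤ)) = (r * s⁻¹) ^ ((k : ℤ)) := by
            rw [zpow_natCast, zpow_natCast, mul_pow, mul_pow, inv_pow, inv_pow]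
            field_simp
            linear_combination h1
          have h4 : ((m : ℤ)) - k = 0 := hroot _
            (by rw [zpow_sub₀ ht0, h2, div_self (zpow_ne_zero _ ht0)])
          omega
        have h1 := hPop (UGen.toU r s .e) _ h
        rw [he k] at h1
        have h2 := hPsmul ((r ^ (-(k : ℤ)) * φ - s ^ (-(k : ℤ)) *
          (φ * (r * s⁻¹) ^ (-(m : ℤ)))) / (r - s))⁻¹ _ h1
        rw [smul_smul, inv_mul_cancel₀ hg, one_smul] at h2
        exact ih (by omega) h2
    have hup : v 0 ∈ P → ∀ j : ℕ, v j ∈ P := by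
      intro h0 j
      induction j with
      | zero => exact h0
      | succ k ih =>
        have h1 := hPop (UGen.toU r s .f) _ ih
        rw [hf k] at h1
        have h2 := hPsmul (qInt r s (k + 1))⁻¹ _ h1
        rwa [smul_smul, inv_mul_cancel₀ (hq (k + 1) (by omega)), one_smul] at h2
    have htopP : v 0 ∈ P → P = ⊤ := by
      intro h0
      rw [Submodule.eq_top_iff']
      intro x
      rw [hxrepr x]
      exact Submodule.sum_mem _ fun i _ => hPsmul _ _ (hup h0 i)
    intro x hx
    show x ∈ N𝕂
    by_contra hxN
    have hex : ∃ j, j ≤ m ∧ v.repr x j ≠ 0 := by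
      by_contra hno
      push_neg at hno
      apply hxN
      rw [hxrepr x]
      refine Submodule.sum_mem _ fun i hi => ?_
      refine Submodule.smul_mem _ _ ?_
      have him : ¬ i ≤ m := fun hh => Finsupp.mem_support_iff.1 hi (hno i hh)
      have hieq : i = m + 1 + (i - (m + 1)) := by omega
      rw [hieq]
      exact hmem _
    obtain ⟨j, hjm, hj⟩ := hex
    exact absurd (htopP (hdown j hjm (hsep x hx j hj))) hP
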